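/- The 4×4 matrix M with rows (1,−1,0,1), (−1,2,1,0), (0,1,1,1), (1,0,1,2) is positive semidefinite of rank 2, has zeros at the two nonedges {1,3} and {2,4} of the 4-cycle, and is extremal in S^4_{⪰0}(C_4). -/

import Mathlib

open Matrix BigOperators

/-- The cone of real positive semidefinite matrices with zeros at nonedges of a graph
with adjacency relation `Adj`. -/
def psdCone {n : Type*} [Fintype n] (Adj : n → n → Prop) : Set (Matrix n n ℝ) :=
  {X | X.PosSemidef ∧ ∀ i j, i ≠ j → ¬ Adj i j → X i j = 0}

/-- `X` lies on an extreme ray of the convex cone `S`: it belongs to `S` and whenever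
`X = A + B` with `A, B ∈ S`, both `A` and `B` are nonnegative multiples of `X`. -/
def IsExtremalIn {n : Type*} [Fintype n] (S : Set (Matrix n n ℝ)) (X : Matrix n n ℝ) : Prop :=
  X ∈ S ∧ ∀ A B : Matrix n n ℝ, A ∈ S → B ∈ S → X = A + B →
    (∃ c : ℝ, 0 ≤ c ∧ A = c • X) ∧ (∃ d : ℝ, 0 ≤ d ∧ B = d • X)

/-- The cone `S^4_⪰0(C_4)` of PSD matrices vanishing at the nonedges `{1,3}` and `{2,4}`
of the 4-cycle (0-based: entries `(0,2)` and `(1,3)`). -/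
def c4Cone : Set (Matrix (Fin 4) (Fin 4) ℝ) :=
  {X | X.PosSemidef ∧ X 0 2 = 0 ∧ X 2 0 = 0 ∧ X 1 3 = 0 ∧ X 3 1 = 0}

def M12 : Matrix (Fin 4) (Fin 4) ℝ :=
  !![1, -1, 0, 1; -1, 2, 1, 0; 0, 1, 1, 1; 1, 0, 1, 2]

/-- A `2 × 4` factor of `M12`. -/
def Bfac : Matrix (Fin 2) (Fin 4) ℝ := !![1, -1, 0, 1; 0, 1, 1, 1]

lemma M12_eq_fac : M12 = Bfacᴴ * Bfac := by
  ext i j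
  fin_cases i <;> fin_cases j <;>
    norm_num [M12, Bfac, Matrix.mul_apply, Fin.sum_univ_succ, Matrix.vecHead, Matrix.vecTail]

lemma M12_posSemidef : M12.PosSemidef :=
  M12_eq_fac ▸ Matrix.posSemidef_conjTranspose_mul_self Bfac

lemma M12_mulVec_u : M12 *ᵥ ![1, 1, -1, 0] = 0 := by
  funext i
  fin_cases i <;> norm_num [M12, Matrix.mulVec, dotProduct, Fin.sum_univ_four, Matrix.cons_val_two, Matrix.cons_val_three]

lemma M12_mulVec_w : M12 *ᵥ ![-1, 0, -1, 1] = 0 := by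
  funext i
  fin_cases i <;> norm_num [M12, Matrix.mulVec, dotProduct, Fin.sum_univ_four, Matrix.cons_val_two, Matrix.cons_val_three]

/-- Any PSD matrix vanishes on kernel vectors of a sum decomposition. -/
lemma kernel_lemma {A B : Matrix (Fin 4) (Fin 4) ℝ} (hA : A.PosSemidef) (hB : B.PosSemidef)
    (h : M12 = A + B) (x : Fin 4 → ℝ) (hx : M12 *ᵥ x = 0) : A *ᵥ x = 0 := by
  have hq : x ⬝ᵥ A *ᵥ x + x ⬝ᵥ B *ᵥ x = 0 := by
    have : x ⬝ᵥ M12 *ᵥ x = 0 := by rw [hx, dotProduct_zero]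
    rw [← this, h, Matrix.add_mulVec, dotProduct_add]
  have h1 : (0:ℝ) ≤ x ⬝ᵥ A *ᵥ x := by simpa using hA.dotProduct_mulVec_nonneg x
  have h2 : (0:ℝ) ≤ x ⬝ᵥ B *ᵥ x := by simpa using hB.dotProduct_mulVec_nonneg x
  have h3 : x ⬝ᵥ A *ᵥ x = 0 := by linarith
  have := (hA.dotProduct_mulVec_zero_iff x).mp (by simpa using h3)
  exact this

lemma half_extremal {A B : Matrix (Fin 4) (Fin 4) ℝ} (hA : A ∈ c4Cone) (hB : B ∈ c4Cone)
    (h : M12 = A + B) : ∃ c : ℝ, 0 ≤ c ∧ A = c • M12 := by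
  obtain ⟨hApsd, hA02, hA20, hA13, hA31⟩ := hA
  obtain ⟨hBpsd, _, _, _, _⟩ := hB
  have hu := kernel_lemma hApsd hBpsd h _ M12_mulVec_u
  have hw := kernel_lemma hApsd hBpsd h _ M12_mulVec_w
  -- symmetry of A
  have hsym : ∀ i j, A j i = A i j := fun i j => by
    have := congrFun (congrFun hApsd.1 j) i
    simpa [Matrix.conjTranspose_apply] using this.symm
  -- extract linear equations
  have eu : ∀ i, A i 0 + A i 1 - A i 2 = 0 := fun i => by
    have := congrFun hu i
    simp [Matrix.mulVec, dotProduct, Fin.sum_univ_four, Matrix.cons_val] at this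
    linarith
  have ew : ∀ i, -A i 0 - A i 2 + A i 3 = 0 := fun i => by
    have := congrFun hw i
    simp [Matrix.mulVec, dotProduct, Fin.sum_univ_four, Matrix.cons_val] at this
    linarith
  have hc : (0:ℝ) ≤ A 0 0 := by
    have := hApsd.dotProduct_mulVec_nonneg ![1, 0, 0, 0]
    simpa [Matrix.mulVec, dotProduct, Fin.sum_univ_four, Matrix.cons_val] using this
  refine ⟨A 0 0, hc, ?_⟩
  have e0 := eu 0; have e1 := eu 1; have e2 := eu 2; have e3 := eu 3
  have f0 := ew 0; have f1 := ew 1; have f2 := ew 2; have f3 := ew 3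
  have s01 := hsym 0 1; have s02 := hsym 0 2; have s03 := hsym 0 3
  have s12 := hsym 1 2; have s13 := hsym 1 3; have s23 := hsym 2 3
  ext i j
  fin_cases i <;> fin_cases j <;>
    simp [M12, Matrix.smul_apply, Matrix.vecHead, Matrix.vecTail] <;> linarith

/-- The matrix with rows `(1,-1,0,1), (-1,2,1,0), (0,1,1,1), (1,0,1,2)` is PSD of rank 2,
vanishes at the nonedges of `C_4`, and is extremal in `S^4_⪰0(C_4)`. -/
theorem M12_extremal :
    M12.PosSemidef ∧ M12.rank = 2 ∧ M12 0 2 = 0 ∧ M12 1 3 = 0 ∧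
      IsExtremalIn c4Cone M12 := by
  refine ⟨M12_posSemidef, ?_, by norm_num [M12, Matrix.cons_val_two, Matrix.cons_val_three], by norm_num [M12, Matrix.cons_val_two, Matrix.cons_val_three], ?_, ?_⟩
  · rw [M12_eq_fac, Matrix.rank_conjTranspose_mul_self,
      ← Matrix.rank_self_mul_conjTranspose]
    have hBB : Bfac * Bfacᴴ = !![3, 0; 0, 3] := by
      ext i j
      fin_cases i <;> fin_cases j <;>
        norm_num [Bfac, Matrix.mul_apply, Fin.sum_univ_four, Matrix.vecHead, Matrix.vecTail, Matrix.cons_val_two, Matrix.cons_val_three]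
    rw [hBB]
    have : IsUnit (!![3, 0; 0, 3] : Matrix (Fin 2) (Fin 2) ℝ) := by
      rw [Matrix.isUnit_iff_isUnit_det, Matrix.det_fin_two_of]
      norm_num
    simpa using Matrix.rank_of_isUnit _ this
  · exact ⟨M12_posSemidef, by norm_num [M12, Matrix.cons_val_two, Matrix.cons_val_three], by norm_num [M12, Matrix.cons_val_two, Matrix.cons_val_three], by norm_num [M12, Matrix.cons_val_two, Matrix.cons_val_three],
      by norm_num [M12, Matrix.cons_val_two, Matrix.cons_val_three]⟩
  · intro A B hA hB hsum
    exact ⟨half_extremal hA hB hsum, half_extremal hB hA (by rw [hsum, add_comm])⟩
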